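/- For m ≥ 2, the distinguishing index of the Mycielskian of the star K_{1,m} satisfies Dist′(μ(K_{1,m})) ≤ r, where r is the minimum natural number such that r² ≥ m + 1. -/

import Mathlib

open SimpleGraph

universe u

/-- A distinguishing edge coloring: no nontrivial automorphism preserves the coloring. -/
def IsDistEdgeColoring {V : Type u} (G : SimpleGraph V) {C : Type*} (c : G.edgeSet → C) : Prop :=
  ∀ φ : G ≃g G, (∀ e : G.edgeSet, c (φ.mapEdgeSet e) = c e) → ∀ v, φ v = v

/-- The distinguishing index: least number of colors in a distinguishing edge coloring. -/
noncomputable def distIndex {V : Type u} (G : SimpleGraph V) : ℕ :=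
  sInf {k : ℕ | ∃ c : G.edgeSet → Fin k, IsDistEdgeColoring G c}

/-- The star `K_{1,m}` with center `0`. -/
def starGraph (m : ℕ) : SimpleGraph (Fin (m + 1)) :=
  SimpleGraph.fromRel fun a _ => a = 0

/-- The Mycielskian: `Sum.inl a` are original vertices, `Sum.inr (Sum.inl a)` their
shadows, and `Sum.inr (Sum.inr _)` the root. -/
def myc {V : Type u} (G : SimpleGraph V) : SimpleGraph (V ⊕ V ⊕ PUnit.{u+1}) :=
  SimpleGraph.fromRel fun x y =>
    match x, y with
    | Sum.inl a, Sum.inl b => G.Adj a b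
    | Sum.inl a, Sum.inr (Sum.inl b) => G.Adj a b
    | Sum.inr (Sum.inl _), Sum.inr (Sum.inr _) => True
    | _, _ => False

/-- The generalized Mycielskian with `t` extra levels: `Sum.inl (j, a)` is the level-`j`
copy of vertex `a` (level `0` being the original vertices), and `Sum.inr _` is the root. -/
def genMyc {V : Type u} (G : SimpleGraph V) (t : ℕ) :
    SimpleGraph ((Fin (t + 1) × V) ⊕ PUnit.{u+1}) :=
  SimpleGraph.fromRel fun x y =>
    match x, y with
    | Sum.inl (j, a), Sum.inl (k, b) =>
        ((j.val = 0 ∧ k.val = 0) ∨ k.val = j.val + 1) ∧ G.Adj a b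
    | Sum.inl (j, _), Sum.inr _ => j.val = t
    | _, _ => False

section Aux

variable {m : ℕ}

lemma adj_ll (a b : Fin (m+1)) :
    (myc (_root_.starGraph m)).Adj (Sum.inl a) (Sum.inl b) ↔ a ≠ b ∧ (a = 0 ∨ b = 0) := by
  simp [myc, _root_.starGraph, fromRel_adj]; tauto

lemma adj_lm (a b : Fin (m+1)) :
    (myc (_root_.starGraph m)).Adj (Sum.inl a) (Sum.inr (Sum.inl b)) ↔ a ≠ b ∧ (a = 0 ∨ b = 0) := by
  simp [myc, _root_.starGraph, fromRel_adj]

lemma adj_ml (a b : Fin (m+1)) :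
    (myc (_root_.starGraph m)).Adj (Sum.inr (Sum.inl b)) (Sum.inl a) ↔ a ≠ b ∧ (a = 0 ∨ b = 0) := by
  rw [(myc (_root_.starGraph m)).adj_comm]; exact adj_lm a b

lemma adj_lr (a : Fin (m+1)) (u : PUnit) :
    ¬ (myc (_root_.starGraph m)).Adj (Sum.inl a) (Sum.inr (Sum.inr u)) := by
  simp [myc, _root_.starGraph, fromRel_adj]

lemma adj_mm (a b : Fin (m+1)) :
    ¬ (myc (_root_.starGraph m)).Adj (Sum.inr (Sum.inl a)) (Sum.inr (Sum.inl b)) := by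
  simp [myc, _root_.starGraph, fromRel_adj]

lemma adj_mr (a : Fin (m+1)) (u : PUnit) :
    (myc (_root_.starGraph m)).Adj (Sum.inr (Sum.inl a)) (Sum.inr (Sum.inr u)) := by
  simp [myc, _root_.starGraph, fromRel_adj]

lemma adj_rm (a : Fin (m+1)) (u : PUnit) :
    (myc (_root_.starGraph m)).Adj (Sum.inr (Sum.inr u)) (Sum.inr (Sum.inl a)) := by
  rw [(myc (_root_.starGraph m)).adj_comm]; exact adj_mr a u

lemma adj_rr (u v : PUnit) :
    ¬ (myc (_root_.starGraph m)).Adj (Sum.inr (Sum.inr u)) (Sum.inr (Sum.inr v)) := by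
  simp [myc, _root_.starGraph, fromRel_adj]

lemma nbrLeaf {a : Fin (m+1)} (ha : a ≠ 0) {y} (h : (myc (_root_.starGraph m)).Adj (Sum.inl a) y) :
    y = Sum.inl 0 ∨ y = Sum.inr (Sum.inl 0) := by
  rcases y with b | b | u
  · rcases (adj_ll a b).1 h with ⟨hne, h0 | h0⟩
    · exact absurd h0 ha
    · exact Or.inl (by rw [h0])
  · rcases (adj_lm a b).1 h with ⟨hne, h0 | h0⟩
    · exact absurd h0 ha
    · exact Or.inr (by rw [h0])
  · exact absurd h (adj_lr a u)

lemma nbrShadow {a : Fin (m+1)} (ha : a ≠ 0) {y}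
    (h : (myc (_root_.starGraph m)).Adj (Sum.inr (Sum.inl a)) y) :
    y = Sum.inl 0 ∨ y = Sum.inr (Sum.inr PUnit.unit) := by
  rcases y with b | b | u
  · rcases (adj_ml b a).1 h with ⟨hne, h0 | h0⟩
    · exact Or.inl (by rw [h0])
    · exact absurd h0 ha
  · exact absurd h (adj_mm a b)
  · cases u; exact Or.inr rfl

lemma nbrU0 {y} (h : (myc (_root_.starGraph m)).Adj (Sum.inr (Sum.inl 0)) y) :
    (∃ b : Fin (m+1), b ≠ 0 ∧ y = Sum.inl b) ∨ y = Sum.inr (Sum.inr PUnit.unit) := by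
  rcases y with b | b | u
  · rcases (adj_ml b 0).1 h with ⟨hne, _⟩
    exact Or.inl ⟨b, hne, rfl⟩
  · exact absurd h (adj_mm 0 b)
  · cases u; exact Or.inr rfl

lemma nbrW {u : PUnit} {y} (h : (myc (_root_.starGraph m)).Adj (Sum.inr (Sum.inr u)) y) :
    ∃ b : Fin (m+1), y = Sum.inr (Sum.inl b) := by
  rcases y with b | b | v
  · exact absurd h.symm (adj_lr b u)
  · exact ⟨b, rfl⟩
  · exact absurd h (adj_rr u v)

/-- "Big" vertices: having at least three distinct neighbors. -/
def MBig (m : ℕ) (x : Fin (m+1) ⊕ (Fin (m+1) ⊕ PUnit)) : Prop :=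
  ∃ y₁ y₂ y₃, y₁ ≠ y₂ ∧ y₁ ≠ y₃ ∧ y₂ ≠ y₃ ∧
    (myc (_root_.starGraph m)).Adj x y₁ ∧ (myc (_root_.starGraph m)).Adj x y₂ ∧ (myc (_root_.starGraph m)).Adj x y₃

lemma MBig_cases {x} (hx : MBig m x) :
    x = Sum.inl 0 ∨ x = Sum.inr (Sum.inl 0) ∨ x = Sum.inr (Sum.inr PUnit.unit) := by
  obtain ⟨y1, y2, y3, h12, h13, h23, a1, a2, a3⟩ := hx
  rcases x with a | a | u
  · by_cases ha : a = 0
    · exact Or.inl (by rw [ha])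
    · exfalso
      rcases nbrLeaf ha a1 with h | h <;> rcases nbrLeaf ha a2 with h' | h' <;>
        rcases nbrLeaf ha a3 with h'' | h'' <;> simp_all
  · by_cases ha : a = 0
    · exact Or.inr (Or.inl (by rw [ha]))
    · exfalso
      rcases nbrShadow ha a1 with h | h <;> rcases nbrShadow ha a2 with h' | h' <;>
        rcases nbrShadow ha a3 with h'' | h'' <;> simp_all
  · cases u; exact Or.inr (Or.inr rfl)

lemma MBig_v0 (hm : 2 ≤ m) : MBig m (Sum.inl 0) := by
  refine ⟨Sum.inl ⟨1, by omega⟩, Sum.inl ⟨2, by omega⟩, Sum.inr (Sum.inl ⟨1, by omega⟩),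
    ?_, ?_, ?_, ?_, ?_, ?_⟩ <;> simp [adj_ll, adj_lm, Fin.ext_iff]

lemma MBig_u0 (hm : 2 ≤ m) : MBig m (Sum.inr (Sum.inl 0)) := by
  refine ⟨Sum.inl ⟨1, by omega⟩, Sum.inl ⟨2, by omega⟩, Sum.inr (Sum.inr PUnit.unit),
    ?_, ?_, ?_, ?_, ?_, adj_mr 0 _⟩ <;> simp [adj_ml, Fin.ext_iff]

lemma MBig_w (hm : 2 ≤ m) : MBig m (Sum.inr (Sum.inr PUnit.unit)) := by
  refine ⟨Sum.inr (Sum.inl 0), Sum.inr (Sum.inl ⟨1, by omega⟩), Sum.inr (Sum.inl ⟨2, by omega⟩),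
    ?_, ?_, ?_, adj_rm 0 _, adj_rm _ _, adj_rm _ _⟩ <;> simp [Fin.ext_iff]

/-- The coloring function on (ordered) pairs of vertices, with values in ℕ. -/
def mycF (m r : ℕ) : (Fin (m+1) ⊕ (Fin (m+1) ⊕ PUnit)) → (Fin (m+1) ⊕ (Fin (m+1) ⊕ PUnit)) → ℕ
  | Sum.inl a, Sum.inl b =>
      if a = 0 then (b.val - 1) / r else if b = 0 then (a.val - 1) / r else 0
  | Sum.inl a, Sum.inr (Sum.inl b) =>
      if b = 0 then (a.val - 1) % r else if a = 0 then b.val / r else 0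
  | Sum.inr (Sum.inl b), Sum.inl a =>
      if b = 0 then (a.val - 1) % r else if a = 0 then b.val / r else 0
  | Sum.inr (Sum.inl a), Sum.inr (Sum.inr _) => a.val % r
  | Sum.inr (Sum.inr _), Sum.inr (Sum.inl a) => a.val % r
  | _, _ => 0

lemma mycF_symm (m r : ℕ) (x y : Fin (m+1) ⊕ (Fin (m+1) ⊕ PUnit)) :
    mycF m r x y = mycF m r y x := by
  rcases x with a | a | u <;> rcases y with b | b | v <;>
    simp only [mycF] <;> split_ifs <;> simp_all


variable {r : ℕ}

lemma mycF_v0l (b : Fin (m+1)) : mycF m r (Sum.inl 0) (Sum.inl b) = (b.val - 1) / r := by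
  simp [mycF]

lemma mycF_u0l (b : Fin (m+1)) : mycF m r (Sum.inr (Sum.inl 0)) (Sum.inl b) = (b.val - 1) % r := by
  simp [mycF]

lemma mycF_lu0 (a : Fin (m+1)) : mycF m r (Sum.inl a) (Sum.inr (Sum.inl 0)) = (a.val - 1) % r := by
  simp [mycF]

lemma mycF_v0m {b : Fin (m+1)} (hb : b ≠ 0) :
    mycF m r (Sum.inl 0) (Sum.inr (Sum.inl b)) = b.val / r := by
  simp [mycF, hb]

lemma mycF_mw (b : Fin (m+1)) (u : PUnit) :
    mycF m r (Sum.inr (Sum.inl b)) (Sum.inr (Sum.inr u)) = b.val % r := by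
  simp [mycF]

/-- The edge coloring. -/
def mycCol (m r : ℕ) (hr : 0 < r) : (myc (_root_.starGraph m)).edgeSet → Fin r :=
  fun e => ⟨Sym2.lift ⟨mycF m r, mycF_symm m r⟩ e.1 % r, Nat.mod_lt _ hr⟩

end Aux

lemma mycCol_dist (m r : ℕ) (hm : 2 ≤ m) (hr : 0 < r) (hmr : m + 1 ≤ r ^ 2) :
    IsDistEdgeColoring (myc (_root_.starGraph m)) (mycCol m r hr) := by
  have hrr : m + 1 ≤ r * r := by rw [pow_two] at hmr; exact hmr
  intro φ hc
  have key : ∀ x y (h : (myc (_root_.starGraph m)).Adj x y),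
      mycF m r (φ x) (φ y) % r = mycF m r x y % r := by
    intro x y h
    have h2 := hc ⟨s(x, y), h⟩
    simp only [mycCol, Iso.mapEdgeSet, Hom.mapEdgeSet, RelEmbedding.coe_toRelHom,
      RelIso.coe_toRelEmbedding, Equiv.coe_fn_mk, Sym2.map_pair_eq, Sym2.lift_mk,
      Fin.mk.injEq] at h2
    exact h2
  have hinj : Function.Injective φ := φ.injective
  have adjmap : ∀ {x y}, (myc (_root_.starGraph m)).Adj x y → (myc (_root_.starGraph m)).Adj (φ x) (φ y) :=
    fun h => φ.map_adj_iff.mpr h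
  have hBmap : ∀ x, MBig m x → MBig m (φ x) := by
    rintro x ⟨y1, y2, y3, h12, h13, h23, a1, a2, a3⟩
    exact ⟨φ y1, φ y2, φ y3, hinj.ne h12, hinj.ne h13, hinj.ne h23,
      adjmap a1, adjmap a2, adjmap a3⟩
  -- Images of the three big vertices
  have hu0' := MBig_cases (hBmap _ (MBig_u0 hm))
  have hw' := MBig_cases (hBmap _ (MBig_w hm))
  have hv0' := MBig_cases (hBmap _ (MBig_v0 hm))
  have haduw : (myc (_root_.starGraph m)).Adj (φ (Sum.inr (Sum.inl 0)))
      (φ (Sum.inr (Sum.inr PUnit.unit))) := adjmap (adj_mr 0 PUnit.unit)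
  -- φ(u0) and φ(w) are u0, w in some order; φ(v0) = v0
  have hpair : (φ (Sum.inr (Sum.inl 0)) = Sum.inr (Sum.inl 0) ∧
        φ (Sum.inr (Sum.inr PUnit.unit)) = Sum.inr (Sum.inr PUnit.unit)) ∨
      (φ (Sum.inr (Sum.inl 0)) = Sum.inr (Sum.inr PUnit.unit) ∧
        φ (Sum.inr (Sum.inr PUnit.unit)) = Sum.inr (Sum.inl 0)) := by
    rcases hu0' with h1 | h1 | h1 <;> rcases hw' with h2 | h2 | h2 <;>
      rw [h1, h2] at haduw
    · exact absurd haduw (myc (_root_.starGraph m)).irrefl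
    · exact absurd haduw (by simp [adj_lm])
    · exact absurd haduw (adj_lr _ _)
    · exact absurd haduw (by simp [adj_ml])
    · exact absurd haduw (myc (_root_.starGraph m)).irrefl
    · exact Or.inl ⟨h1, h2⟩
    · exact absurd haduw.symm (adj_lr _ _)
    · exact Or.inr ⟨h1, h2⟩
    · exact absurd haduw (myc (_root_.starGraph m)).irrefl
  have hv0 : φ (Sum.inl 0) = Sum.inl 0 := by
    have n1 : φ (Sum.inl 0) ≠ φ (Sum.inr (Sum.inl 0)) := hinj.ne (by simp)
    have n2 : φ (Sum.inl 0) ≠ φ (Sum.inr (Sum.inr PUnit.unit)) := hinj.ne (by simp)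
    rcases hpair with ⟨h1, h2⟩ | ⟨h1, h2⟩ <;> rw [h1] at n1 <;> rw [h2] at n2 <;>
      rcases hv0' with h | h | h <;> simp_all
  rcases hpair with ⟨hu0, hw⟩ | ⟨hu0, hw⟩
  · -- identity case
    have hleaf : ∀ a : Fin (m+1), a ≠ 0 → φ (Sum.inl a) = Sum.inl a := by
      intro a ha
      have h1 : (myc (_root_.starGraph m)).Adj (φ (Sum.inl a)) (Sum.inl 0) := by
        have := adjmap ((adj_ll a 0).2 ⟨ha, Or.inr rfl⟩); rwa [hv0] at this
      have h2 : (myc (_root_.starGraph m)).Adj (φ (Sum.inl a)) (Sum.inr (Sum.inl 0)) := by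
        have := adjmap ((adj_lm a 0).2 ⟨ha, Or.inr rfl⟩); rwa [hu0] at this
      rcases nbrU0 h2.symm with ⟨b, hb0, hb⟩ | hbw
      · have k1 := key (Sum.inl 0) (Sum.inl a)
          ((adj_ll 0 a).2 ⟨Ne.symm ha, Or.inl rfl⟩)
        have k2 := key (Sum.inr (Sum.inl 0)) (Sum.inl a)
          ((adj_ml a 0).2 ⟨ha, Or.inr rfl⟩)
        rw [hv0, hb] at k1
        rw [hu0, hb] at k2
        rw [mycF_v0l, mycF_v0l] at k1
        rw [mycF_u0l, mycF_u0l] at k2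
        have hda : (a.val - 1) / r < r := Nat.div_lt_of_lt_mul (by have := a.isLt; omega)
        have hdb : (b.val - 1) / r < r := Nat.div_lt_of_lt_mul (by have := b.isLt; omega)
        have e1 : (b.val - 1) / r = (a.val - 1) / r := by
          rwa [Nat.mod_eq_of_lt hdb, Nat.mod_eq_of_lt hda] at k1
        have e2 : (b.val - 1) % r = (a.val - 1) % r := by
          rwa [Nat.mod_mod_of_dvd _ dvd_rfl, Nat.mod_mod_of_dvd _ dvd_rfl] at k2
        have hval : b.val - 1 = a.val - 1 := by
          rw [← Nat.div_add_mod (b.val - 1) r, ← Nat.div_add_mod (a.val - 1) r, e1, e2]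
        have hba : b = a := by
          have ha' : a.val ≠ 0 := fun h => ha (Fin.ext (by simp [h]))
          have hb' : b.val ≠ 0 := fun h => hb0 (Fin.ext (by simp [h]))
          exact Fin.ext (by omega)
        rw [hb, hba]
      · exfalso
        have : Sum.inl a = Sum.inr (Sum.inr PUnit.unit) := hinj (by rw [hbw, hw])
        simp at this
    have hsh : ∀ a : Fin (m+1), a ≠ 0 → φ (Sum.inr (Sum.inl a)) = Sum.inr (Sum.inl a) := by
      intro a ha
      have h2 : (myc (_root_.starGraph m)).Adj (φ (Sum.inr (Sum.inl a))) (Sum.inr (Sum.inr PUnit.unit)) := by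
        have := adjmap (adj_mr a PUnit.unit); rwa [hw] at this
      obtain ⟨b, hb⟩ := nbrW h2.symm
      have h1 : (myc (_root_.starGraph m)).Adj (Sum.inl (0 : Fin (m+1))) (Sum.inr (Sum.inl b)) := by
        have := adjmap ((adj_lm 0 a).2 ⟨Ne.symm ha, Or.inl rfl⟩); rwa [hv0, hb] at this
      have hb0 : b ≠ 0 := fun h => by simp [h] at h1; exact ((adj_lm 0 0).1 h1).1 rfl
      have k1 := key (Sum.inl 0) (Sum.inr (Sum.inl a))
        ((adj_lm 0 a).2 ⟨Ne.symm ha, Or.inl rfl⟩)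
      have k2 := key (Sum.inr (Sum.inl a)) (Sum.inr (Sum.inr PUnit.unit)) (adj_mr a PUnit.unit)
      rw [hv0, hb] at k1
      rw [hb, hw] at k2
      rw [mycF_v0m hb0, mycF_v0m ha] at k1
      rw [mycF_mw, mycF_mw] at k2
      have hda : a.val / r < r := Nat.div_lt_of_lt_mul (by have := a.isLt; omega)
      have hdb : b.val / r < r := Nat.div_lt_of_lt_mul (by have := b.isLt; omega)
      have e1 : b.val / r = a.val / r := by
        rwa [Nat.mod_eq_of_lt hdb, Nat.mod_eq_of_lt hda] at k1
      have e2 : b.val % r = a.val % r := by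
        rwa [Nat.mod_mod_of_dvd _ dvd_rfl, Nat.mod_mod_of_dvd _ dvd_rfl] at k2
      have hval : b.val = a.val := by
        rw [← Nat.div_add_mod b.val r, ← Nat.div_add_mod a.val r, e1, e2]
      rw [hb, Fin.ext hval]
    intro v
    rcases v with a | a | u
    · by_cases ha : a = 0
      · rw [ha]; exact hv0
      · exact hleaf a ha
    · by_cases ha : a = 0
      · rw [ha]; exact hu0
      · exact hsh a ha
    · cases u; exact hw
  · -- swap case: contradiction
    exfalso
    obtain ⟨a, hav, ha⟩ : ∃ a : Fin (m+1), a.val = 1 ∧ a ≠ 0 :=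
      ⟨⟨1, by omega⟩, rfl, by simp [Fin.ext_iff]⟩
    have h2 : (myc (_root_.starGraph m)).Adj (φ (Sum.inl a)) (Sum.inr (Sum.inr PUnit.unit)) := by
      have := adjmap ((adj_lm a 0).2 ⟨ha, Or.inr rfl⟩); rwa [hu0] at this
    obtain ⟨b, hb⟩ := nbrW h2.symm
    have h1 : (myc (_root_.starGraph m)).Adj (Sum.inl (0 : Fin (m+1))) (Sum.inr (Sum.inl b)) := by
      have := adjmap ((adj_ll 0 a).2 ⟨Ne.symm ha, Or.inl rfl⟩); rwa [hv0, hb] at this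
    have hb0 : b ≠ 0 := fun h => by simp [h] at h1; exact ((adj_lm 0 0).1 h1).1 rfl
    have k1 := key (Sum.inl 0) (Sum.inl a) ((adj_ll 0 a).2 ⟨Ne.symm ha, Or.inl rfl⟩)
    have k2 := key (Sum.inl a) (Sum.inr (Sum.inl 0)) ((adj_lm a 0).2 ⟨ha, Or.inr rfl⟩)
    rw [hv0, hb] at k1
    rw [hb, hu0] at k2
    rw [mycF_v0m hb0, mycF_v0l, hav] at k1
    rw [mycF_mw, mycF_lu0, hav] at k2
    simp only [Nat.sub_self, Nat.zero_div, Nat.zero_mod] at k1 k2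
    have hdb : b.val / r < r := Nat.div_lt_of_lt_mul (by have := b.isLt; omega)
    have e1 : b.val / r = 0 := by rwa [Nat.mod_eq_of_lt hdb] at k1
    have e2 : b.val % r = 0 := by rwa [Nat.mod_mod_of_dvd _ dvd_rfl] at k2
    have : b.val = 0 := by rw [← Nat.div_add_mod b.val r, e1, e2]; ring
    exact hb0 (Fin.ext (by simp [this]))

theorem distIndex_myc_star_le (m : ℕ) (hm : 2 ≤ m) :
    distIndex (myc (_root_.starGraph m)) ≤ sInf {r : ℕ | m + 1 ≤ r ^ 2} := by
  set r := sInf {r : ℕ | m + 1 ≤ r ^ 2} with hr_def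
  have hne : {r : ℕ | m + 1 ≤ r ^ 2}.Nonempty := ⟨m + 1, Nat.le_self_pow two_ne_zero _⟩
  have hmem : m + 1 ≤ r ^ 2 := Nat.sInf_mem hne
  have hr : 0 < r := by
    rcases Nat.eq_zero_or_pos r with h | h
    · rw [h] at hmem; simp at hmem
    · exact h
  exact Nat.sInf_le ⟨mycCol m r hr, mycCol_dist m r hm hr hmem⟩
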